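/- Let P = ⋂_{j=1}^{N} {x ∈ ℝⁿ : ⟨q_j, x⟩ ≥ r_j} be a nonempty polyhedron. Then for every e ∈ ℝⁿ, the linear functional x ↦ ⟨e, x⟩ is bounded below on P (i.e., inf{⟨e, x⟩ : x ∈ P} > −∞) if and only if e ∈ CoSp(q_1,…,q_N). -/

import Mathlib

open scoped RealInnerProductSpace

noncomputable section

section Aux

variable {H : Type*} [NormedAddCommGroup H] [NormedSpace ℝ H]

/-- The conical span of a finite family. -/
def coneSet {N : ℕ} (q : Fin N → H) : Set H :=
  {x | ∃ c : Fin N → ℝ, (∀ j, 0 ≤ c j) ∧ x = ∑ j, c j • q j}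

lemma isClosed_coneSet [T2Space H] : ∀ (N : ℕ) (q : Fin N → H), IsClosed (coneSet q) := by
  intro N
  induction N with
  | zero =>
    intro q
    have : coneSet q = {0} := by
      ext x
      constructor
      · rintro ⟨c, _, rfl⟩; simp
      · rintro rfl; exact ⟨0, fun j => le_refl 0, by simp⟩
    rw [this]; exact isClosed_singleton
  | succ m ih =>
    intro q
    by_cases hli : LinearIndependent ℝ q
    · -- image of the nonnegative orthant under a closed embedding
      set f : (Fin (m + 1) → ℝ) →ₗ[ℝ] H := Fintype.linearCombination ℝ q with hf
      have hker : LinearMap.ker f = ⊥ := by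
        rw [LinearMap.ker_eq_bot']
        intro c hc
        rw [Fintype.linearIndependent_iff] at hli
        funext j
        exact hli c (by simpa [f, Fintype.linearCombination_apply] using hc) j
      have hemb := LinearMap.isClosedEmbedding_of_injective hker
      have horth : IsClosed {c : Fin (m + 1) → ℝ | ∀ j, 0 ≤ c j} := by
        have : {c : Fin (m + 1) → ℝ | ∀ j, 0 ≤ c j} = ⋂ j, {c | 0 ≤ c j} := by
          ext c; simp
        rw [this]
        exact isClosed_iInter fun j => isClosed_Ici.preimage (continuous_apply j)
      have himg : coneSet q = f '' {c : Fin (m + 1) → ℝ | ∀ j, 0 ≤ c j} := by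
        ext x
        constructor
        · rintro ⟨c, hc, rfl⟩
          exact ⟨c, hc, by simp [f, Fintype.linearCombination_apply]⟩
        · rintro ⟨c, hc, rfl⟩
          exact ⟨c, hc, by simp [f, Fintype.linearCombination_apply]⟩
      rw [himg]
      exact hemb.isClosedMap _ horth
    · -- dependent: the cone is a finite union of cones on fewer generators
      rw [Fintype.not_linearIndependent_iff] at hli
      obtain ⟨g, hg0, i₀, hgi₀⟩ := hli
      -- WLOG there is a positive coefficient
      obtain ⟨d, hd0, j₁, hdj₁⟩ :
          ∃ d : Fin (m + 1) → ℝ, ∑ j, d j • q j = 0 ∧ ∃ j, 0 < d j := by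
        rcases lt_trichotomy (g i₀) 0 with h | h | h
        · exact ⟨-g, by simpa using congrArg Neg.neg hg0, i₀, by simpa using h⟩
        · exact absurd h hgi₀
        · exact ⟨g, hg0, i₀, h⟩
      have key : coneSet q = ⋃ j ∈ {j | 0 < d j}, coneSet (q ∘ j.succAbove) := by
        ext x
        constructor
        · rintro ⟨c, hc, rfl⟩
          -- pick the minimizer of c j / d j over positive d j
          have hSne : ({j | 0 < d j} : Set (Fin (m + 1))).toFinset.Nonempty := by
            exact ⟨j₁, by simpa using hdj₁⟩
          obtain ⟨j₀, hj₀S, hj₀min⟩ :=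
            ({j | 0 < d j} : Set (Fin (m + 1))).toFinset.exists_min_image
              (fun j => c j / d j) hSne
          simp only [Set.mem_toFinset, Set.mem_setOf_eq] at hj₀S
          set t : ℝ := c j₀ / d j₀ with ht
          have ht0 : 0 ≤ t := div_nonneg (hc j₀) hj₀S.le
          set c' : Fin (m + 1) → ℝ := fun j => c j - t * d j with hc'
          have hc'0 : ∀ j, 0 ≤ c' j := by
            intro j
            rcases le_or_gt (d j) 0 with h | h
            · have : t * d j ≤ 0 := mul_nonpos_of_nonneg_of_nonpos ht0 h
              simp only [hc']; linarith [hc j]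
            · have := hj₀min j (by simpa using h)
              rw [div_le_div_iff₀ hj₀S h] at this
              simp only [hc', ht]
              rw [sub_nonneg, div_mul_eq_mul_div, div_le_iff₀ hj₀S]
              linarith
          have hc'j₀ : c' j₀ = 0 := by
            simp only [hc', ht]
            field_simp
            ring
          have hsum : ∑ j, c' j • q j = ∑ j, c j • q j := by
            simp only [hc', sub_smul, mul_smul, Finset.sum_sub_distrib, ← Finset.smul_sum, hd0,
              smul_zero, sub_zero]
          refine Set.mem_biUnion hj₀S ⟨c' ∘ j₀.succAbove, fun j => hc'0 _, ?_⟩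
          rw [← hsum, Fin.sum_univ_succAbove _ j₀, hc'j₀, zero_smul, zero_add]
          rfl
        · intro hx
          simp only [Set.mem_iUnion] at hx
          obtain ⟨j, _, c, hc, rfl⟩ := hx
          refine ⟨Fin.insertNth j 0 c, fun i => ?_, ?_⟩
          · rcases eq_or_ne i j with rfl | h
            · simp
            · obtain ⟨k, rfl⟩ := Fin.exists_succAbove_eq h
              simpa using hc k
          · rw [Fin.sum_univ_succAbove _ j]
            simp
      rw [key]
      exact Set.Finite.isClosed_biUnion (Set.toFinite _) fun j _ => ih _

end Aux

section Aux2

variable {H : Type*} [NormedAddCommGroup H] [InnerProductSpace ℝ H]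

/-- The conical span as a convex cone. -/
def coneCone {N : ℕ} (q : Fin N → H) : ConvexCone ℝ H where
  carrier := coneSet q
  smul_mem' := by
    rintro a ha x ⟨c, hc, rfl⟩
    exact ⟨fun j => a * c j, fun j => mul_nonneg ha.le (hc j), by
      simp [Finset.smul_sum, mul_smul]⟩
  add_mem' := by
    rintro x ⟨c, hc, rfl⟩ y ⟨c', hc', rfl⟩
    exact ⟨c + c', fun j => add_nonneg (hc j) (hc' j), by
      simp [add_smul, Finset.sum_add_distrib]⟩

end Aux2

/-- For a nonempty polyhedron `P = ⋂ⱼ {x : ⟨qⱼ, x⟩ ≥ rⱼ}` and any `e ∈ ℝⁿ`, the linear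
functional `x ↦ ⟨e, x⟩` is bounded below on `P` if and only if `e` is a nonnegative
combination of the normal vectors `q₁, …, q_N`. -/
theorem stmt8 {n N : ℕ} (q : Fin N → EuclideanSpace ℝ (Fin n)) (r : Fin N → ℝ)
    (P : Set (EuclideanSpace ℝ (Fin n)))
    (hP : P = {x | ∀ j, r j ≤ ⟪q j, x⟫}) (hne : P.Nonempty)
    (e : EuclideanSpace ℝ (Fin n)) :
    (∃ b : ℝ, ∀ x ∈ P, b ≤ ⟪e, x⟫) ↔
      ∃ c : Fin N → ℝ, (∀ j, 0 ≤ c j) ∧ e = ∑ j, c j • q j := by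
  constructor
  · rintro ⟨b, hb⟩
    by_contra he
    have hne' : (coneCone q : Set (EuclideanSpace ℝ (Fin n))).Nonempty :=
      ⟨0, 0, fun j => le_refl 0, by simp⟩
    have hcl : IsClosed (coneCone q : Set (EuclideanSpace ℝ (Fin n))) := isClosed_coneSet N q
    have henm : e ∉ coneCone q := he
    obtain ⟨y, hy1, hy2⟩ :=
      ProperCone.hyperplane_separation' (C := ⟨(coneCone q).toPointedCone ⟨0, fun j => le_refl 0, by simp⟩, hcl⟩) henm
    have hqy : ∀ j, 0 ≤ ⟪q j, y⟫ := by
      intro j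
      refine hy1 (q j) ⟨fun i => if i = j then 1 else 0, fun i => by positivity, ?_⟩
      simp [ite_smul]
    obtain ⟨x₀, hx₀⟩ := hne
    have hmem : ∀ t : ℝ, 0 ≤ t → x₀ + t • y ∈ P := by
      intro t ht
      rw [hP]
      intro j
      have h1 : r j ≤ ⟪q j, x₀⟫ := by rw [hP] at hx₀; exact hx₀ j
      have h2 : 0 ≤ t * ⟪q j, y⟫ := mul_nonneg ht (hqy j)
      rw [inner_add_right, real_inner_smul_right]
      linarith
    have hey : ⟪e, y⟫ < 0 := hy2
    set t : ℝ := max 0 ((b - ⟪e, x₀⟫ - 1) / ⟪e, y⟫) with htdef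
    have ht0 : 0 ≤ t := le_max_left _ _
    have hbound := hb _ (hmem t ht0)
    rw [inner_add_right, real_inner_smul_right] at hbound
    have hge : (b - ⟪e, x₀⟫ - 1) / ⟪e, y⟫ ≤ t := le_max_right _ _
    have : t * ⟪e, y⟫ ≤ b - ⟪e, x₀⟫ - 1 := by
      rw [div_le_iff_of_neg hey] at hge
      linarith
    linarith
  · rintro ⟨c, hc, rfl⟩
    refine ⟨∑ j, c j * r j, fun x hx => ?_⟩
    rw [hP] at hx
    rw [sum_inner]
    refine Finset.sum_le_sum fun j _ => ?_
    rw [real_inner_smul_left]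
    exact mul_le_mul_of_nonneg_left (hx j) (hc j)
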